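/- arXiv:1011.2615 — 4 statements merged into one kernel-verified Lean document; each statement's English description precedes it below -/
import Mathlib

section
/- Let T > 0 and let φ : (-∞,T] → E be strongly measurable, continuous on [0,T], and such that (φ_0, φ(0)) ∈ ℬ. Then for every t ∈ [0,T] one has ‖φ(t)‖ ≤ ‖(φ_t, φ(t))‖_ℬ ≤ K(t)·sup_{s∈[0,t]}‖φ(s)‖ + M(t)·‖(φ_0, φ(0))‖_ℬ, where K(t) := 1 + (∫_{-t}^0 g(u) du)^{1/p} and M(t) := max{(∫_{-t}^0 g(u) du)^{1/p}, G(-t)^{1/p}}. -/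
open MeasureTheory Set

private lemma rpow_add_le_add_rpow_real {a b q : ℝ} (ha : 0 ≤ a) (hb : 0 ≤ b)
    (hq : 0 ≤ q) (hq1 : q ≤ 1) : (a + b) ^ q ≤ a ^ q + b ^ q := by
  have h := NNReal.rpow_add_le_add_rpow a.toNNReal b.toNNReal hq hq1
  have h2 : (((a.toNNReal + b.toNNReal) ^ q : NNReal) : ℝ)
      ≤ ((a.toNNReal ^ q : NNReal) : ℝ) + ((b.toNNReal ^ q : NNReal) : ℝ) := by
    exact_mod_cast h
  rw [NNReal.coe_rpow, NNReal.coe_rpow, NNReal.coe_rpow, NNReal.coe_add,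
    Real.coe_toNNReal a ha, Real.coe_toNNReal b hb] at h2
  exact h2

/-- the `K`–`M` estimate `\eqref{eqn:KM_ineq}` for the history space
`ℬ = L^p_g(-∞,0;E) × E` with `‖(φ,x)‖_ℬ = ‖x‖ + (∫_{-∞}^0 g(θ)‖φ(θ)‖^p dθ)^{1/p}`:
for `φ` strongly measurable, continuous on `[0,T]` with `(φ₀,φ(0)) ∈ ℬ`, and `t ∈ [0,T]`,
`‖φ(t)‖ ≤ ‖(φ_t,φ(t))‖_ℬ ≤ K(t)·sup_{s∈[0,t]}‖φ(s)‖ + M(t)·‖(φ₀,φ(0))‖_ℬ`, where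
`K(t) = 1 + (∫_{-t}^0 g)^{1/p}` and `M(t) = max{(∫_{-t}^0 g)^{1/p}, G(-t)^{1/p}}`. -/
theorem history_KM_inequality
    {E : Type*} [NormedAddCommGroup E] [NormedSpace ℝ E] [CompleteSpace E]
    (p : ℝ) (hp : 1 ≤ p)
    (g G : ℝ → ℝ)
    (hg_pos : ∀ θ ≤ (0:ℝ), 0 < g θ)
    (hg_int : ∀ r : ℝ, 0 ≤ r → IntegrableOn g (Set.Icc (-r) 0))
    (hG_nonneg : ∀ s ≤ (0:ℝ), 0 ≤ G s)
    (hG_locbdd : ∀ r : ℝ, 0 ≤ r → ∃ C : ℝ, ∀ s ∈ Set.Icc (-r) 0, G s ≤ C)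
    (hGg : ∀ s ≤ (0:ℝ),
      ∀ᵐ θ ∂(volume.restrict (Set.Iic (0:ℝ))), g (s + θ) ≤ G s * g θ)
    (T : ℝ) (hT : 0 < T)
    (φ : ℝ → E) (hφ_meas : StronglyMeasurable φ)
    (hφ_cont : ContinuousOn φ (Set.Icc 0 T))
    (hφ_init : IntegrableOn (fun θ => g θ * ‖φ θ‖ ^ p) (Set.Iic (0:ℝ)))
    (t : ℝ) (ht : t ∈ Set.Icc 0 T) :
    ‖φ t‖ ≤ ‖φ t‖ + (∫ θ in Set.Iic (0:ℝ), g θ * ‖φ (t + θ)‖ ^ p) ^ (1/p) ∧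
    ‖φ t‖ + (∫ θ in Set.Iic (0:ℝ), g θ * ‖φ (t + θ)‖ ^ p) ^ (1/p) ≤
      (1 + (∫ u in Set.Icc (-t) (0:ℝ), g u) ^ (1/p)) *
        (⨆ s ∈ Set.Icc (0:ℝ) t, ‖φ s‖) +
      (max ((∫ u in Set.Icc (-t) (0:ℝ), g u) ^ (1/p)) ((G (-t)) ^ (1/p))) *
        (‖φ 0‖ + (∫ θ in Set.Iic (0:ℝ), g θ * ‖φ θ‖ ^ p) ^ (1/p)) := by
  obtain ⟨ht0, htT⟩ := ht
  have hp0 : (0:ℝ) < p := lt_of_lt_of_le one_pos hp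
  have hq0 : (0:ℝ) ≤ 1/p := by positivity
  have hq1 : 1/p ≤ 1 := by rw [div_le_one hp0]; exact hp
  have hnt : -t ≤ (0:ℝ) := neg_nonpos.mpr ht0
  have hG0 : 0 ≤ G (-t) := hG_nonneg _ hnt
  set S := ⨆ s ∈ Set.Icc (0:ℝ) t, ‖φ s‖ with hS
  set C := ∫ u in Set.Icc (-t) (0:ℝ), g u with hCdef
  set J := ∫ θ in Set.Iic (0:ℝ), g θ * ‖φ θ‖ ^ p with hJdef
  set f : ℝ → ℝ := fun θ => g θ * ‖φ (t + θ)‖ ^ p with hfdef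
  set h : ℝ → ℝ := fun θ => g θ * ‖φ θ‖ ^ p with hhdef
  -- sup bound
  have hsub : Set.Icc (0:ℝ) t ⊆ Set.Icc (0:ℝ) T := Icc_subset_Icc le_rfl htT
  have hSle : ∀ s ∈ Set.Icc (0:ℝ) t, ‖φ s‖ ≤ S := by
    obtain ⟨B, hB⟩ := (isCompact_Icc.image_of_continuousOn
      ((hφ_cont.mono hsub).norm)).bddAbove
    have hbdd : BddAbove (Set.range fun s => ⨆ (_ : s ∈ Set.Icc (0:ℝ) t), ‖φ s‖) := by
      refine ⟨max B 0, ?_⟩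
      rintro x ⟨s, rfl⟩
      by_cases hs : s ∈ Set.Icc (0:ℝ) t
      · show (⨆ (_ : s ∈ Set.Icc (0:ℝ) t), ‖φ s‖) ≤ max B 0
        rw [ciSup_pos (f := fun _ : s ∈ Set.Icc (0:ℝ) t => ‖φ s‖) hs]
        exact le_max_of_le_left (hB ⟨s, hs, rfl⟩)
      · show (⨆ (_ : s ∈ Set.Icc (0:ℝ) t), ‖φ s‖) ≤ max B 0
        haveI : IsEmpty (s ∈ Set.Icc (0:ℝ) t) := ⟨hs⟩
        rw [iSup, Set.range_eq_empty, Real.sSup_empty]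
        exact le_max_right _ _
    intro s hs
    have heq : ‖φ s‖ = ⨆ (_ : s ∈ Set.Icc (0:ℝ) t), ‖φ s‖ :=
      (ciSup_pos (f := fun _ : s ∈ Set.Icc (0:ℝ) t => ‖φ s‖) hs).symm
    rw [heq]
    exact le_ciSup hbdd s
  have hS0 : 0 ≤ S := le_trans (norm_nonneg _) (hSle 0 ⟨le_rfl, ht0⟩)
  -- nonnegativity of integrals
  have hI0 : 0 ≤ ∫ θ in Set.Iic (0:ℝ), f θ :=
    setIntegral_nonneg measurableSet_Iic fun θ hθ =>
      mul_nonneg (hg_pos θ hθ).le (Real.rpow_nonneg (norm_nonneg _) p)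
  have hJ0 : 0 ≤ J :=
    setIntegral_nonneg measurableSet_Iic fun θ hθ =>
      mul_nonneg (hg_pos θ hθ).le (Real.rpow_nonneg (norm_nonneg _) p)
  have hC0 : 0 ≤ C :=
    setIntegral_nonneg measurableSet_Icc fun θ hθ => (hg_pos θ hθ.2).le
  refine ⟨le_add_of_nonneg_right (Real.rpow_nonneg hI0 _), ?_⟩
  -- measurability pieces
  have hm : Measurable fun θ => ‖φ (t + θ)‖ ^ p :=
    (Real.continuous_rpow_const hp0.le).measurable.comp
      ((hφ_meas.comp_measurable (measurable_const_add t)).norm.measurable)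
  have hm' : Measurable fun θ => ‖φ θ‖ ^ p :=
    (Real.continuous_rpow_const hp0.le).measurable.comp (hφ_meas.norm.measurable)
  have hgm : AEStronglyMeasurable g (volume.restrict (Set.Iic (0:ℝ))) := by
    have hU : Set.Iic (0:ℝ) = ⋃ n : ℕ, Set.Icc (-(n:ℝ)) 0 := by
      ext x
      simp only [mem_Iic, mem_iUnion, mem_Icc]
      constructor
      · intro hx
        obtain ⟨n, hn⟩ := exists_nat_ge (-x)
        exact ⟨n, by linarith, hx⟩
      · rintro ⟨n, _, hx⟩; exact hx
    rw [hU, aestronglyMeasurable_iUnion_iff]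
    exact fun n => (hg_int n n.cast_nonneg).aestronglyMeasurable
  -- integrability and bound on Ioc (-t) 0
  have hg_intIoc : IntegrableOn g (Set.Ioc (-t) 0) :=
    (hg_int t ht0).mono_set Ioc_subset_Icc_self
  have hAmeas : AEStronglyMeasurable f (volume.restrict (Set.Ioc (-t) (0:ℝ))) := by
    refine AEStronglyMeasurable.mul ?_ hm.aestronglyMeasurable
    exact hgm.mono_measure (Measure.restrict_mono (fun x hx => hx.2) le_rfl)
  have hAint : IntegrableOn f (Set.Ioc (-t) 0) := by
    refine Integrable.mono' (hg_intIoc.const_mul (S ^ p)) hAmeas ?_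
    filter_upwards [ae_restrict_mem measurableSet_Ioc] with θ hθ
    have hθ0 : θ ≤ 0 := hθ.2
    have hf0 : 0 ≤ f θ :=
      mul_nonneg (hg_pos θ hθ0).le (Real.rpow_nonneg (norm_nonneg _) p)
    rw [Real.norm_of_nonneg hf0]
    have hmem : t + θ ∈ Set.Icc (0:ℝ) t := ⟨by linarith [hθ.1], by linarith⟩
    have : ‖φ (t + θ)‖ ^ p ≤ S ^ p :=
      Real.rpow_le_rpow (norm_nonneg _) (hSle _ hmem) hp0.le
    calc g θ * ‖φ (t + θ)‖ ^ p ≤ g θ * S ^ p :=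
          mul_le_mul_of_nonneg_left this (hg_pos θ hθ0).le
      _ = S ^ p * g θ := mul_comm _ _
  have hA : ∫ θ in Set.Ioc (-t) (0:ℝ), f θ ≤ S ^ p * C := by
    calc ∫ θ in Set.Ioc (-t) (0:ℝ), f θ
        ≤ ∫ θ in Set.Ioc (-t) (0:ℝ), S ^ p * g θ := by
          refine setIntegral_mono_on hAint (hg_intIoc.const_mul _)
            measurableSet_Ioc fun θ hθ => ?_
          have : ‖φ (t + θ)‖ ^ p ≤ S ^ p :=
            Real.rpow_le_rpow (norm_nonneg _)
              (hSle _ ⟨by linarith [hθ.1], by linarith [hθ.2]⟩) hp0.le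
          calc g θ * ‖φ (t + θ)‖ ^ p ≤ g θ * S ^ p :=
                mul_le_mul_of_nonneg_left this (hg_pos θ hθ.2).le
            _ = S ^ p * g θ := mul_comm _ _
      _ = S ^ p * ∫ θ in Set.Ioc (-t) (0:ℝ), g θ := integral_const_mul _ _
      _ = S ^ p * C := by rw [hCdef, integral_Icc_eq_integral_Ioc]
  -- translation part
  set e : ℝ → ℝ := fun θ => θ + (-t) with hedef
  have hemb : MeasurableEmbedding e := measurableEmbedding_addRight (-t)
  have hmp : MeasurePreserving e volume volume := measurePreserving_add_right volume (-t)
  have hpre : e ⁻¹' (Set.Iic (-t)) = Set.Iic (0:ℝ) := by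
    ext θ; simp [hedef]
  set k : ℝ → ℝ := fun θ => g (-t + θ) * ‖φ θ‖ ^ p with hkdef
  have hfek : ∀ θ, f (e θ) = k θ := by
    intro θ
    simp only [hfdef, hkdef, hedef]
    rw [show t + (θ + -t) = θ by ring, show θ + -t = -t + θ by ring]
  have hkmeas : AEStronglyMeasurable k (volume.restrict (Set.Iic (0:ℝ))) := by
    refine AEStronglyMeasurable.mul ?_ hm'.aestronglyMeasurable
    have h1 : AEStronglyMeasurable g (volume.restrict (Set.Iic (-t))) :=
      hgm.mono_measure (Measure.restrict_mono (Iic_subset_Iic.mpr hnt) le_rfl)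
    have h2 : MeasurePreserving e (volume.restrict (Set.Iic (0:ℝ)))
        (volume.restrict (Set.Iic (-t))) := by
      have := hmp.restrict_preimage_emb hemb (Set.Iic (-t))
      rwa [hpre] at this
    have := h1.comp_measurePreserving h2
    refine this.congr (Filter.Eventually.of_forall fun θ => ?_)
    simp only [Function.comp_apply, hedef]
    rw [show θ + -t = -t + θ by ring]
  have hkbound : ∀ᵐ θ ∂(volume.restrict (Set.Iic (0:ℝ))),
      ‖k θ‖ ≤ G (-t) * (g θ * ‖φ θ‖ ^ p) := by
    filter_upwards [ae_restrict_mem measurableSet_Iic, hGg (-t) hnt] with θ hθ hgg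
    have hk0 : 0 ≤ k θ :=
      mul_nonneg (hg_pos _ (by simp only [mem_Iic] at hθ; linarith)).le
        (Real.rpow_nonneg (norm_nonneg _) p)
    rw [Real.norm_of_nonneg hk0]
    calc g (-t + θ) * ‖φ θ‖ ^ p
        ≤ (G (-t) * g θ) * ‖φ θ‖ ^ p :=
          mul_le_mul_of_nonneg_right hgg (Real.rpow_nonneg (norm_nonneg _) p)
      _ = G (-t) * (g θ * ‖φ θ‖ ^ p) := by ring
  have hkint : IntegrableOn k (Set.Iic (0:ℝ)) :=
    Integrable.mono' (hφ_init.const_mul (G (-t))) hkmeas hkbound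
  have hBint : IntegrableOn f (Set.Iic (-t)) := by
    rw [← hmp.integrableOn_comp_preimage hemb (f := f) (s := Set.Iic (-t)), hpre]
    exact hkint.congr_fun (fun θ _ => (hfek θ).symm) measurableSet_Iic
  have hB : ∫ θ in Set.Iic (-t), f θ ≤ G (-t) * J := by
    have heq : ∫ θ in Set.Iic (-t), f θ = ∫ θ in Set.Iic (0:ℝ), k θ := by
      rw [← hmp.setIntegral_preimage_emb hemb f (Set.Iic (-t)), hpre]
      exact setIntegral_congr_fun measurableSet_Iic fun θ _ => hfek θ
    rw [heq]
    calc ∫ θ in Set.Iic (0:ℝ), k θ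
        ≤ ∫ θ in Set.Iic (0:ℝ), G (-t) * (g θ * ‖φ θ‖ ^ p) := by
          refine integral_mono_ae hkint (hφ_init.const_mul _) ?_
          filter_upwards [hkbound] with θ hθ
          exact le_trans (le_abs_self _) hθ
      _ = G (-t) * J := integral_const_mul _ _
  -- split the integral
  have hsplit : ∫ θ in Set.Iic (0:ℝ), f θ
      = (∫ θ in Set.Iic (-t), f θ) + ∫ θ in Set.Ioc (-t) (0:ℝ), f θ := by
    rw [← setIntegral_union (Iic_disjoint_Ioc le_rfl) measurableSet_Ioc hBint hAint,
      Iic_union_Ioc_eq_Iic hnt]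
  have hItot : ∫ θ in Set.Iic (0:ℝ), f θ ≤ S ^ p * C + G (-t) * J := by
    rw [hsplit]; linarith
  -- rpow estimates
  have hfin : (∫ θ in Set.Iic (0:ℝ), f θ) ^ (1/p) ≤ S * C ^ (1/p) + G (-t) ^ (1/p) * J ^ (1/p) := by
    have h1 : (∫ θ in Set.Iic (0:ℝ), f θ) ^ (1/p) ≤ (S ^ p * C + G (-t) * J) ^ (1/p) :=
      Real.rpow_le_rpow hI0 hItot hq0
    have h2 : (S ^ p * C + G (-t) * J) ^ (1/p)
        ≤ (S ^ p * C) ^ (1/p) + (G (-t) * J) ^ (1/p) :=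
      rpow_add_le_add_rpow_real (mul_nonneg (Real.rpow_nonneg hS0 p) hC0)
        (mul_nonneg hG0 hJ0) hq0 hq1
    have h3 : (S ^ p * C) ^ (1/p) = S * C ^ (1/p) := by
      rw [Real.mul_rpow (Real.rpow_nonneg hS0 p) hC0, ← Real.rpow_mul hS0,
        mul_one_div, div_self hp0.ne', Real.rpow_one]
    have h4 : (G (-t) * J) ^ (1/p) = G (-t) ^ (1/p) * J ^ (1/p) :=
      Real.mul_rpow hG0 hJ0
    rw [h3, h4] at h2
    exact le_trans h1 h2
  -- final assembly
  have hmax : G (-t) ^ (1/p) * J ^ (1/p)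
      ≤ max (C ^ (1/p)) (G (-t) ^ (1/p)) * (‖φ 0‖ + J ^ (1/p)) := by
    refine mul_le_mul (le_max_right _ _) (le_add_of_nonneg_left (norm_nonneg _))
      (Real.rpow_nonneg hJ0 _) (le_trans (Real.rpow_nonneg hG0 _) (le_max_right _ _))
  have hφtS : ‖φ t‖ ≤ S := hSle t ⟨ht0, le_rfl⟩
  have hcomm : S * C ^ (1/p) = C ^ (1/p) * S := mul_comm _ _
  rw [add_mul, one_mul]
  linarith [hfin, hφtS, hmax, hcomm]
end

section
/- Let T > 0 and let φ, ψ : (-∞,T] → E be strongly measurable functions that are continuous on [0,T], satisfy φ(θ) = ψ(θ) for all θ ≤ 0, and have (φ_0, φ(0)) ∈ ℬ and (ψ_0, ψ(0)) ∈ ℬ. Then for every t ∈ [0,T], ‖((φ-ψ)_t, (φ-ψ)(t))‖_ℬ ≤ K(t)·sup_{s∈[0,t]}‖φ(s) - ψ(s)‖, where K(t) := 1 + (∫_{-t}^0 g(u) du)^{1/p}; in particular ‖((φ-ψ)_t, (φ-ψ)(t))‖_ℬ ≤ (sup_{s∈[0,T]} K(s))·sup_{s∈[0,T]}‖φ(s)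 - ψ(s)‖. -/
open MeasureTheory Set

lemma le_biSup_real (f : ℝ → ℝ) {s : Set ℝ} (hb : BddAbove (f '' s)) {x : ℝ} (hx : x ∈ s) :
    f x ≤ ⨆ y ∈ s, f y := by
  obtain ⟨C, hC⟩ := hb
  have hbdd : BddAbove (Set.range fun y => ⨆ _ : y ∈ s, f y) := by
    refine ⟨max C 0, ?_⟩
    rintro _ ⟨y, rfl⟩
    simp only
    by_cases h : y ∈ s
    · rw [ciSup_pos h]
      exact le_max_of_le_left (hC (mem_image_of_mem f h))
    · have : IsEmpty (y ∈ s) := ⟨h⟩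
      simp [Real.iSup_of_isEmpty]
  have := le_ciSup hbdd x
  rwa [ciSup_pos hx] at this

lemma biSup_le_real (f : ℝ → ℝ) {s : Set ℝ} {a : ℝ} (ha : 0 ≤ a) (h : ∀ x ∈ s, f x ≤ a) :
    (⨆ y ∈ s, f y) ≤ a :=
  Real.iSup_le (fun y => Real.iSup_le (fun hy => h y hy) ha) ha

/-- if `φ, ψ : (-∞,T] → E` are strongly measurable, continuous on `[0,T]`,
agree on `(-∞,0]`, and have initial histories in `ℬ = L^p_g(-∞,0;E) × E`, then for every
`t ∈ [0,T]`,
`‖((φ-ψ)_t, (φ-ψ)(t))‖_ℬ ≤ K(t)·sup_{s∈[0,t]}‖φ(s)-ψ(s)‖` with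
`K(t) = 1 + (∫_{-t}^0 g)^{1/p}`, and in particular
`‖((φ-ψ)_t, (φ-ψ)(t))‖_ℬ ≤ (sup_{s∈[0,T]} K(s))·sup_{s∈[0,T]}‖φ(s)-ψ(s)‖`. -/
theorem history_difference_estimate
    {E : Type*} [NormedAddCommGroup E] [NormedSpace ℝ E] [CompleteSpace E]
    (p : ℝ) (hp : 1 ≤ p)
    (g G : ℝ → ℝ)
    (hg_pos : ∀ θ ≤ (0:ℝ), 0 < g θ)
    (hg_int : ∀ r : ℝ, 0 ≤ r → IntegrableOn g (Set.Icc (-r) 0))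
    (hG_nonneg : ∀ s ≤ (0:ℝ), 0 ≤ G s)
    (hG_locbdd : ∀ r : ℝ, 0 ≤ r → ∃ C : ℝ, ∀ s ∈ Set.Icc (-r) 0, G s ≤ C)
    (hGg : ∀ s ≤ (0:ℝ),
      ∀ᵐ θ ∂(volume.restrict (Set.Iic (0:ℝ))), g (s + θ) ≤ G s * g θ)
    (T : ℝ) (hT : 0 < T)
    (φ ψ : ℝ → E) (hφ_meas : StronglyMeasurable φ) (hψ_meas : StronglyMeasurable ψ)
    (hφ_cont : ContinuousOn φ (Set.Icc 0 T)) (hψ_cont : ContinuousOn ψ (Set.Icc 0 T))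
    (hagree : ∀ θ ≤ (0:ℝ), φ θ = ψ θ)
    (hφ_init : IntegrableOn (fun θ => g θ * ‖φ θ‖ ^ p) (Set.Iic (0:ℝ)))
    (hψ_init : IntegrableOn (fun θ => g θ * ‖ψ θ‖ ^ p) (Set.Iic (0:ℝ)))
    (t : ℝ) (ht : t ∈ Set.Icc 0 T) :
    ‖φ t - ψ t‖ + (∫ θ in Set.Iic (0:ℝ), g θ * ‖(φ (t + θ) - ψ (t + θ))‖ ^ p) ^ (1/p) ≤
      (1 + (∫ u in Set.Icc (-t) (0:ℝ), g u) ^ (1/p)) *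
        (⨆ s ∈ Set.Icc (0:ℝ) t, ‖φ s - ψ s‖) ∧
    ‖φ t - ψ t‖ + (∫ θ in Set.Iic (0:ℝ), g θ * ‖(φ (t + θ) - ψ (t + θ))‖ ^ p) ^ (1/p) ≤
      (⨆ s ∈ Set.Icc (0:ℝ) T, (1 + (∫ u in Set.Icc (-s) (0:ℝ), g u) ^ (1/p))) *
        (⨆ s ∈ Set.Icc (0:ℝ) T, ‖φ s - ψ s‖) := by
  obtain ⟨ht0, htT⟩ := ht
  have hp0 : (0:ℝ) < p := lt_of_lt_of_le one_pos hp
  have hp0' : p ≠ 0 := ne_of_gt hp0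
  set f : ℝ → ℝ := fun s => ‖φ s - ψ s‖ with hf
  -- boundedness of f on compact intervals
  have hsubT : Set.Icc (0:ℝ) t ⊆ Set.Icc 0 T := Set.Icc_subset_Icc_right htT
  have hf_contT : ContinuousOn f (Set.Icc 0 T) := (hφ_cont.sub hψ_cont).norm
  have hbT : BddAbove (f '' Set.Icc 0 T) :=
    isCompact_Icc.bddAbove_image hf_contT
  have hbt : BddAbove (f '' Set.Icc 0 t) :=
    isCompact_Icc.bddAbove_image (hf_contT.mono hsubT)
  set M : ℝ := ⨆ s ∈ Set.Icc (0:ℝ) t, f s with hM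
  set MT : ℝ := ⨆ s ∈ Set.Icc (0:ℝ) T, f s with hMT
  have hftM : f t ≤ M := le_biSup_real f hbt ⟨ht0, le_refl t⟩
  have hM0 : 0 ≤ M := le_trans (norm_nonneg _) hftM
  have hMMT : M ≤ MT := by
    have hMT0 : 0 ≤ MT := le_trans (norm_nonneg _)
      (le_biSup_real f hbT ⟨ht0, htT⟩)
    exact biSup_le_real f hMT0 (fun s hs => le_biSup_real f hbT (hsubT hs))
  have hMT0 : 0 ≤ MT := le_trans hM0 hMMT
  set I : ℝ := ∫ u in Set.Icc (-t) (0:ℝ), g u with hI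
  have hI0 : 0 ≤ I :=
    setIntegral_nonneg measurableSet_Icc (fun θ hθ => (hg_pos θ hθ.2).le)
  -- the integrand
  set F : ℝ → ℝ := fun θ => g θ * ‖φ (t + θ) - ψ (t + θ)‖ ^ p with hF
  -- F vanishes on Iic (-t); rewrite integral over Iic 0
  have hFzero : ∀ θ ∈ Set.Iic (0:ℝ), F θ = (Set.Ioc (-t) (0:ℝ)).indicator F θ := by
    intro θ hθ
    by_cases h : θ ∈ Set.Ioc (-t) (0:ℝ)
    · rw [Set.indicator_of_mem h]
    · rw [Set.indicator_of_notMem h]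
      have hθt : t + θ ≤ 0 := by
        rcases not_and_or.1 h with h1 | h2
        · push_neg at h1; linarith
        · exact absurd hθ h2
      have : φ (t + θ) = ψ (t + θ) := hagree _ hθt
      simp [hF, this, Real.zero_rpow hp0']
  have hIic : (∫ θ in Set.Iic (0:ℝ), F θ) = ∫ θ in Set.Ioc (-t) (0:ℝ), F θ := by
    rw [setIntegral_congr_fun measurableSet_Iic hFzero,
      setIntegral_indicator measurableSet_Ioc,
      Set.inter_eq_self_of_subset_right (fun x hx => hx.2)]
  -- integrability and bounds on Ioc (-t) 0
  have hg_Ioc : IntegrableOn g (Set.Ioc (-t) (0:ℝ)) :=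
    (hg_int t ht0).mono_set Set.Ioc_subset_Icc_self
  have hbound_int : IntegrableOn (fun θ => g θ * M ^ p) (Set.Ioc (-t) (0:ℝ)) :=
    hg_Ioc.mul_const _
  have hF_le : ∀ θ ∈ Set.Ioc (-t) (0:ℝ), F θ ≤ g θ * M ^ p := by
    intro θ hθ
    have hmem : t + θ ∈ Set.Icc (0:ℝ) t := ⟨by linarith [hθ.1], by linarith [hθ.2]⟩
    have h1 : f (t + θ) ≤ M := le_biSup_real f hbt hmem
    have h2 : ‖φ (t + θ) - ψ (t + θ)‖ ^ p ≤ M ^ p :=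
      Real.rpow_le_rpow (norm_nonneg _) h1 hp0.le
    exact mul_le_mul_of_nonneg_left h2 (hg_pos θ hθ.2).le
  have hF_nonneg : ∀ θ ∈ Set.Ioc (-t) (0:ℝ), 0 ≤ F θ := by
    intro θ hθ
    exact mul_nonneg (hg_pos θ hθ.2).le (Real.rpow_nonneg (norm_nonneg _) _)
  have hF_meas : AEStronglyMeasurable F (volume.restrict (Set.Ioc (-t) (0:ℝ))) := by
    refine hg_Ioc.aestronglyMeasurable.mul ?_
    have hm : Measurable fun θ : ℝ => ‖φ (t + θ) - ψ (t + θ)‖ :=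
      (((hφ_meas.comp_measurable (measurable_const_add t)).sub
        (hψ_meas.comp_measurable (measurable_const_add t))).norm).measurable
    exact (hm.pow measurable_const).aestronglyMeasurable
  have hF_int : IntegrableOn F (Set.Ioc (-t) (0:ℝ)) := by
    refine MeasureTheory.Integrable.mono hbound_int hF_meas ?_
    refine (ae_restrict_iff' measurableSet_Ioc).2 (ae_of_all _ (fun θ hθ => ?_))
    rw [Real.norm_of_nonneg (hF_nonneg θ hθ),
      Real.norm_of_nonneg (mul_nonneg (hg_pos θ hθ.2).le (Real.rpow_nonneg hM0 _))]
    exact hF_le θ hθ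
  have hJle : (∫ θ in Set.Ioc (-t) (0:ℝ), F θ) ≤ M ^ p * I := by
    have h1 : (∫ θ in Set.Ioc (-t) (0:ℝ), F θ) ≤
        ∫ θ in Set.Ioc (-t) (0:ℝ), g θ * M ^ p :=
      setIntegral_mono_on hF_int hbound_int measurableSet_Ioc hF_le
    have h2 : (∫ θ in Set.Ioc (-t) (0:ℝ), g θ * M ^ p) = M ^ p * I := by
      rw [integral_mul_const, hI, integral_Icc_eq_integral_Ioc, mul_comm]
    linarith [h1, h2.le]
  have hJ0 : 0 ≤ ∫ θ in Set.Ioc (-t) (0:ℝ), F θ :=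
    setIntegral_nonneg measurableSet_Ioc hF_nonneg
  -- key rpow computation
  have hrpow : (M ^ p * I) ^ (1/p) = M * I ^ (1/p) := by
    rw [Real.mul_rpow (Real.rpow_nonneg hM0 _) hI0, ← Real.rpow_mul hM0,
      mul_one_div_cancel hp0', Real.rpow_one]
  have hmain : ‖φ t - ψ t‖ + (∫ θ in Set.Iic (0:ℝ), F θ) ^ (1/p) ≤
      (1 + I ^ (1/p)) * M := by
    have h1 : (∫ θ in Set.Iic (0:ℝ), F θ) ^ (1/p) ≤ M * I ^ (1/p) := by
      rw [hIic, ← hrpow]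
      exact Real.rpow_le_rpow hJ0 hJle (by positivity)
    have h2 : ‖φ t - ψ t‖ ≤ M := hftM
    nlinarith [h1, h2]
  refine ⟨hmain, ?_⟩
  -- second part
  set K : ℝ → ℝ := fun s => 1 + (∫ u in Set.Icc (-s) (0:ℝ), g u) ^ (1/p) with hK
  have hKbdd : BddAbove (K '' Set.Icc (0:ℝ) T) := by
    refine ⟨1 + (∫ u in Set.Icc (-T) (0:ℝ), g u) ^ (1/p), ?_⟩
    rintro _ ⟨s, hs, rfl⟩
    have hsub : Set.Icc (-s) (0:ℝ) ⊆ Set.Icc (-T) 0 :=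
      Set.Icc_subset_Icc (by linarith [hs.2]) le_rfl
    have hmono : (∫ u in Set.Icc (-s) (0:ℝ), g u) ≤ ∫ u in Set.Icc (-T) (0:ℝ), g u := by
      refine setIntegral_mono_set (hg_int T hT.le) ?_ (ae_of_all _ hsub)
      exact (ae_restrict_iff' measurableSet_Icc).2
        (ae_of_all _ (fun θ hθ => (hg_pos θ hθ.2).le))
    have hs0 : 0 ≤ ∫ u in Set.Icc (-s) (0:ℝ), g u :=
      setIntegral_nonneg measurableSet_Icc (fun θ hθ => (hg_pos θ hθ.2).le)
    exact add_le_add_right (Real.rpow_le_rpow hs0 hmono (by positivity)) 1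
  have hKt : K t ≤ ⨆ s ∈ Set.Icc (0:ℝ) T, K s := le_biSup_real K hKbdd ⟨ht0, htT⟩
  have hKt0 : 0 ≤ K t := by
    have : 0 ≤ I ^ (1/p) := Real.rpow_nonneg hI0 _
    simp only [hK]; linarith
  calc ‖φ t - ψ t‖ + (∫ θ in Set.Iic (0:ℝ), F θ) ^ (1/p) ≤ (1 + I ^ (1/p)) * M := hmain
    _ ≤ (⨆ s ∈ Set.Icc (0:ℝ) T, K s) * MT :=
        mul_le_mul hKt hMMT hM0 (le_trans hKt0 hKt)
end

section
/- Let T > 0, α ∈ (0,1/2), p ∈ [1,∞). Let Φ : (-∞,0] → E and φ : (0,T] → E be strongly measurable, and define φ̃ : (-∞,T] → E by φ̃ = Φ on (-∞,0] and φ̃ = φ on (0,T], and Φ̂ : (-∞,T] → E by Φ̂ = Φ on (-∞,0] and Φ̂ = 0 on (0,T]. Then for every t ∈ [0,T], ∫_{-∞}^0 g(r)·(∫_0^t (t-s)^{-2α}‖φ̃(s+r)‖^2 ds)^{p/2} dr ≤ 2^{p-1}·[ ∫_{-∞}^0 g(r)·(∫_0^t (t-s)^{-2α}‖Φ̂(s+r)‖^2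 ds)^{p/2} dr + (∫_{-t}^0 g(r) dr)·sup_{t'∈[0,T]} (∫_0^{t'} (t'-u)^{-2α}‖φ(u)‖^2 du)^{p/2} ]. -/
open MeasureTheory Set ENNReal
set_option maxHeartbeats 1000000

private lemma two_pow_split_aux (p : ℝ) (hp : 1 ≤ p) (a b : ℝ≥0∞) :
    (a + b) ^ (p/2) ≤ (2:ℝ≥0∞) ^ (p-1) * (a ^ (p/2) + b ^ (p/2)) := by
  rcases le_or_gt 1 (p/2) with h | h
  · calc (a+b)^(p/2) ≤ (2:ℝ≥0∞)^(p/2-1) * (a^(p/2)+b^(p/2)) :=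
        ENNReal.rpow_add_le_mul_rpow_add_rpow a b h
    _ ≤ (2:ℝ≥0∞)^(p-1) * (a^(p/2)+b^(p/2)) :=
        mul_le_mul_left (ENNReal.rpow_le_rpow_of_exponent_le (by norm_num) (by linarith)) _
  · calc (a+b)^(p/2) ≤ a^(p/2)+b^(p/2) :=
        ENNReal.rpow_add_le_add_rpow a b (by linarith) h.le
    _ ≤ (2:ℝ≥0∞)^(p-1) * (a^(p/2)+b^(p/2)) := by
        nth_rewrite 1 [← one_mul (a^(p/2)+b^(p/2))]
        refine mul_le_mul_left ?_ _
        calc (1:ℝ≥0∞) = 2^(0:ℝ) := by simp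
        _ ≤ 2^(p-1) := ENNReal.rpow_le_rpow_of_exponent_le (by norm_num) (by linarith)

/-- let `φ̃` be `Φ` on `(-∞,0]` and `φ` on `(0,T]`, and `Φ̂` be `Φ` on
`(-∞,0]` and `0` on `(0,T]`. Then for `t ∈ [0,T]` (in the extended reals):
`∫_{-∞}^0 g(r)·(∫_0^t (t-s)^{-2α}‖φ̃(s+r)‖² ds)^{p/2} dr
  ≤ 2^{p-1}·[ ∫_{-∞}^0 g(r)·(∫_0^t (t-s)^{-2α}‖Φ̂(s+r)‖² ds)^{p/2} dr
    + (∫_{-t}^0 g(r) dr)·sup_{t'∈[0,T]} (∫_0^{t'} (t'-u)^{-2α}‖φ(u)‖² du)^{p/2} ]`. -/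
theorem tilde_history_kernel_estimate
    {E : Type*} [NormedAddCommGroup E] [NormedSpace ℝ E] [CompleteSpace E]
    (p : ℝ) (hp : 1 ≤ p)
    (g G : ℝ → ℝ)
    (hg_pos : ∀ θ ≤ (0:ℝ), 0 < g θ)
    (hg_int : ∀ r : ℝ, 0 ≤ r → IntegrableOn g (Set.Icc (-r) 0))
    (hG_nonneg : ∀ s ≤ (0:ℝ), 0 ≤ G s)
    (hG_locbdd : ∀ r : ℝ, 0 ≤ r → ∃ C : ℝ, ∀ s ∈ Set.Icc (-r) 0, G s ≤ C)
    (hGg : ∀ s ≤ (0:ℝ),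
      ∀ᵐ θ ∂(volume.restrict (Set.Iic (0:ℝ))), g (s + θ) ≤ G s * g θ)
    (T α : ℝ) (hT : 0 < T) (hα : α ∈ Set.Ioo (0:ℝ) (1/2))
    (Φ φ : ℝ → E) (hΦ_meas : StronglyMeasurable Φ) (hφ_meas : StronglyMeasurable φ)
    (t : ℝ) (ht : t ∈ Set.Icc 0 T) :
    (∫⁻ r in Set.Iic (0:ℝ), ENNReal.ofReal (g r) *
        (∫⁻ s in Set.Ioc (0:ℝ) t,
          ENNReal.ofReal ((t - s) ^ (-(2*α))) *
            (‖(if s + r ≤ 0 then Φ (s + r) else φ (s + r))‖₊ : ℝ≥0∞) ^ 2) ^ (p/2)) ≤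
      (2 : ℝ≥0∞) ^ (p - 1) *
        ((∫⁻ r in Set.Iic (0:ℝ), ENNReal.ofReal (g r) *
            (∫⁻ s in Set.Ioc (0:ℝ) t,
              ENNReal.ofReal ((t - s) ^ (-(2*α))) *
                (‖(if s + r ≤ 0 then Φ (s + r) else 0)‖₊ : ℝ≥0∞) ^ 2) ^ (p/2)) +
          (∫⁻ r in Set.Icc (-t) (0:ℝ), ENNReal.ofReal (g r)) *
            ⨆ t' ∈ Set.Icc (0:ℝ) T,
              (∫⁻ u in Set.Ioc (0:ℝ) t',
                ENNReal.ofReal ((t' - u) ^ (-(2*α))) * (‖φ u‖₊ : ℝ≥0∞) ^ 2) ^ (p/2)) := by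
  obtain ⟨ht0, htT⟩ := ht
  have hq0 : (0:ℝ) < p / 2 := by linarith
  set q : ℝ := p / 2 with hq
  set K : ℝ → ℝ≥0∞ := fun s => ENNReal.ofReal ((t - s) ^ (-(2*α))) with hK
  set F₁ : ℝ → ℝ → ℝ≥0∞ :=
    fun r s => K s * (if s + r ≤ 0 then (‖Φ (s+r)‖₊ : ℝ≥0∞)^2 else 0) with hF₁
  set F₂ : ℝ → ℝ → ℝ≥0∞ :=
    fun r s => K s * (if s + r ≤ 0 then 0 else (‖φ (s+r)‖₊ : ℝ≥0∞)^2) with hF₂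
  set I₁ : ℝ → ℝ≥0∞ := fun r => ∫⁻ s in Ioc (0:ℝ) t, F₁ r s with hI₁
  set I₂ : ℝ → ℝ≥0∞ := fun r => ∫⁻ s in Ioc (0:ℝ) t, F₂ r s with hI₂
  set S : ℝ≥0∞ := ⨆ t' ∈ Icc (0:ℝ) T, (∫⁻ u in Ioc (0:ℝ) t',
      ENNReal.ofReal ((t' - u) ^ (-(2*α))) * (‖φ u‖₊ : ℝ≥0∞) ^ 2) ^ q with hS
  -- measurability
  have hK_meas : Measurable K := by
    have : Measurable fun s : ℝ => (t - s) ^ (-(2*α)) :=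
      (measurable_const.sub measurable_id).pow_const _
    exact this.ennreal_ofReal
  have hcond : MeasurableSet {z : ℝ × ℝ | z.2 + z.1 ≤ 0} :=
    measurableSet_le (measurable_snd.add measurable_fst) measurable_const
  have hF₁_joint : Measurable (fun z : ℝ × ℝ => F₁ z.1 z.2) := by
    simp only [hF₁]
    exact (hK_meas.comp measurable_snd).mul
      (Measurable.ite hcond
        ((hΦ_meas.enorm.comp (measurable_snd.add measurable_fst)).pow_const 2)
        measurable_const)
  have hF₂_joint : Measurable (fun z : ℝ × ℝ => F₂ z.1 z.2) := by
    simp only [hF₂]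
    exact (hK_meas.comp measurable_snd).mul
      (Measurable.ite hcond measurable_const
        ((hφ_meas.enorm.comp (measurable_snd.add measurable_fst)).pow_const 2))
  have hF₁_meas : ∀ r, Measurable (F₁ r) :=
    fun r => hF₁_joint.comp measurable_prodMk_left
  have hI₁_meas : Measurable I₁ := hF₁_joint.lintegral_prod_right'
  -- g is a.e.-measurable on Iic 0
  have hIic : Iic (0:ℝ) = ⋃ n : ℕ, Icc (-(n:ℝ)) 0 := by
    ext x
    simp only [mem_Iic, mem_iUnion, mem_Icc]
    constructor
    · intro hx
      obtain ⟨n, hn⟩ := exists_nat_ge (-x)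
      exact ⟨n, by linarith, hx⟩
    · rintro ⟨n, _, hx⟩
      exact hx
  have hg_aemeas : AEMeasurable (fun r => ENNReal.ofReal (g r))
      (volume.restrict (Iic (0:ℝ))) := by
    rw [hIic, aemeasurable_iUnion_iff]
    intro n
    exact ((hg_int n n.cast_nonneg).aestronglyMeasurable.aemeasurable).ennreal_ofReal
  -- pointwise splitting of the integrand
  have hsplit : ∀ r s, K s * (‖(if s + r ≤ 0 then Φ (s + r) else φ (s + r))‖₊ : ℝ≥0∞) ^ 2
      = F₁ r s + F₂ r s := by
    intro r s
    by_cases h : s + r ≤ 0 <;> simp [hF₁, hF₂, h]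
  have hinner : ∀ r, (∫⁻ s in Ioc (0:ℝ) t,
      K s * (‖(if s + r ≤ 0 then Φ (s + r) else φ (s + r))‖₊ : ℝ≥0∞) ^ 2) = I₁ r + I₂ r := by
    intro r
    rw [hI₁, hI₂, ← lintegral_add_left (hF₁_meas r)]
    exact lintegral_congr fun s => hsplit r s
  -- the first RHS term equals ∫ g ⬝ I₁ ^ q
  have hEq1 : (∫⁻ r in Iic (0:ℝ), ENNReal.ofReal (g r) *
      (∫⁻ s in Ioc (0:ℝ) t,
        K s * (‖(if s + r ≤ 0 then Φ (s + r) else (0:E))‖₊ : ℝ≥0∞) ^ 2) ^ q)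
      = ∫⁻ r in Iic (0:ℝ), ENNReal.ofReal (g r) * I₁ r ^ q := by
    refine lintegral_congr fun r => ?_
    congr 2
    refine lintegral_congr fun s => ?_
    by_cases h : s + r ≤ 0 <;> simp [hF₁, h]
  -- translation identity for I₂
  have htrans : ∀ r : ℝ, I₂ r = ∫⁻ u in Ioc r (t + r),
      ENNReal.ofReal ((t + r - u) ^ (-(2*α))) * (if u ≤ 0 then 0 else (‖φ u‖₊ : ℝ≥0∞)^2) := by
    intro r
    set h : ℝ → ℝ≥0∞ := (Ioc r (t+r)).indicator
      (fun u => ENNReal.ofReal ((t + r - u) ^ (-(2*α))) *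
        (if u ≤ 0 then 0 else (‖φ u‖₊ : ℝ≥0∞)^2)) with hh
    have key : ∀ s, (Ioc (0:ℝ) t).indicator (F₂ r) s = h (s + r) := by
      intro s
      by_cases hs : s ∈ Ioc (0:ℝ) t
      · have hs' : s + r ∈ Ioc r (t + r) := by
          rw [mem_Ioc] at hs ⊢
          constructor <;> linarith [hs.1, hs.2]
        rw [indicator_of_mem hs, hh, indicator_of_mem hs']
        have ht' : t + r - (s + r) = t - s := by ring
        simp only [hF₂, hK, ht']
      · have hs' : s + r ∉ Ioc r (t + r) := by
          rw [mem_Ioc] at hs ⊢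
          intro hc
          exact hs ⟨by linarith [hc.1], by linarith [hc.2]⟩
        rw [indicator_of_notMem hs, hh, indicator_of_notMem hs']
    calc I₂ r = ∫⁻ s, (Ioc (0:ℝ) t).indicator (F₂ r) s :=
          (lintegral_indicator measurableSet_Ioc _).symm
      _ = ∫⁻ s, h (s + r) := lintegral_congr key
      _ = ∫⁻ u, h u := lintegral_add_right_eq_self h r
      _ = _ := lintegral_indicator measurableSet_Ioc _
  have hzero : ∀ r : ℝ, r < -t → I₂ r = 0 := by
    intro r hr
    refine le_antisymm ?_ zero_le
    have : I₂ r ≤ ∫⁻ _ in Ioc (0:ℝ) t, 0 := by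
      refine setLIntegral_mono' measurableSet_Ioc fun s hs => ?_
      rw [mem_Ioc] at hs
      have h0 : s + r ≤ 0 := by linarith [hs.2]
      simp [hF₂, h0]
    simpa using this
  -- pointwise bound for the second term
  have hbound : ∀ r ∈ Iic (0:ℝ), ENNReal.ofReal (g r) * I₂ r ^ q ≤
      (Icc (-t) (0:ℝ)).indicator (fun r => ENNReal.ofReal (g r) * S) r := by
    intro r hr
    by_cases hrt : -t ≤ r
    · have hmem : r ∈ Icc (-t) (0:ℝ) := ⟨hrt, hr⟩
      rw [indicator_of_mem hmem]
      refine mul_le_mul_right ?_ _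
      have h1 : I₂ r ≤ ∫⁻ u in Ioc (0:ℝ) (t+r),
          ENNReal.ofReal ((t + r - u) ^ (-(2*α))) * (‖φ u‖₊ : ℝ≥0∞)^2 := by
        rw [htrans r, ← lintegral_indicator measurableSet_Ioc,
          ← lintegral_indicator measurableSet_Ioc]
        refine lintegral_mono fun u => ?_
        by_cases hu : u ∈ Ioc r (t+r)
        · rw [indicator_of_mem hu]
          by_cases hu0 : u ≤ 0
          · simp [hu0]
          · rw [if_neg hu0]
            have hu' : u ∈ Ioc (0:ℝ) (t+r) := ⟨lt_of_not_ge hu0, hu.2⟩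
            rw [indicator_of_mem hu']
        · simp [indicator_of_notMem hu]
      calc I₂ r ^ q ≤ (∫⁻ u in Ioc (0:ℝ) (t+r),
            ENNReal.ofReal ((t + r - u) ^ (-(2*α))) * (‖φ u‖₊ : ℝ≥0∞)^2) ^ q :=
            ENNReal.rpow_le_rpow h1 hq0.le
        _ ≤ S := by
            rw [hS]
            exact le_biSup (fun t' => (∫⁻ u in Ioc (0:ℝ) t',
              ENNReal.ofReal ((t' - u) ^ (-(2*α))) * (‖φ u‖₊ : ℝ≥0∞)^2) ^ q)
              (⟨by linarith, by linarith [mem_Iic.mp hr]⟩ : t + r ∈ Icc (0:ℝ) T)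
    · rw [indicator_of_notMem (fun hm => hrt hm.1), hzero r (lt_of_not_ge hrt),
        ENNReal.zero_rpow_of_pos hq0, mul_zero]
  have hIneq2 : (∫⁻ r in Iic (0:ℝ), ENNReal.ofReal (g r) * I₂ r ^ q) ≤
      (∫⁻ r in Icc (-t) (0:ℝ), ENNReal.ofReal (g r)) * S := by
    calc (∫⁻ r in Iic (0:ℝ), ENNReal.ofReal (g r) * I₂ r ^ q)
        ≤ ∫⁻ r in Iic (0:ℝ), (Icc (-t) (0:ℝ)).indicator
            (fun r => ENNReal.ofReal (g r) * S) r :=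
          lintegral_mono_ae ((ae_restrict_iff' measurableSet_Iic).mpr (ae_of_all _ hbound))
      _ = ∫⁻ r in Icc (-t) (0:ℝ), ENNReal.ofReal (g r) * S := by
          rw [lintegral_indicator measurableSet_Icc,
            Measure.restrict_restrict measurableSet_Icc,
            inter_eq_self_of_subset_left Icc_subset_Iic_self]
      _ = (∫⁻ r in Icc (-t) (0:ℝ), ENNReal.ofReal (g r)) * S :=
          lintegral_mul_const'' S
            ((hg_int t ht0).aestronglyMeasurable.aemeasurable.ennreal_ofReal)
  have h2top : (2:ℝ≥0∞) ^ (p - 1) ≠ ⊤ :=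
    ENNReal.rpow_ne_top_of_nonneg (by linarith) (by norm_num)
  calc (∫⁻ r in Iic (0:ℝ), ENNReal.ofReal (g r) *
        (∫⁻ s in Ioc (0:ℝ) t,
          K s * (‖(if s + r ≤ 0 then Φ (s + r) else φ (s + r))‖₊ : ℝ≥0∞) ^ 2) ^ q)
      = ∫⁻ r in Iic (0:ℝ), ENNReal.ofReal (g r) * (I₁ r + I₂ r) ^ q :=
        lintegral_congr fun r => by rw [hinner r]
    _ ≤ ∫⁻ r in Iic (0:ℝ), ENNReal.ofReal (g r) *
          ((2:ℝ≥0∞) ^ (p-1) * (I₁ r ^ q + I₂ r ^ q)) :=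
        lintegral_mono fun r => mul_le_mul_right (two_pow_split_aux p hp _ _) _
    _ = (2:ℝ≥0∞) ^ (p-1) * ∫⁻ r in Iic (0:ℝ),
          (ENNReal.ofReal (g r) * I₁ r ^ q + ENNReal.ofReal (g r) * I₂ r ^ q) := by
        rw [← lintegral_const_mul' _ _ h2top]
        exact lintegral_congr fun r => by ring
    _ = (2:ℝ≥0∞) ^ (p-1) * ((∫⁻ r in Iic (0:ℝ), ENNReal.ofReal (g r) * I₁ r ^ q) +
          ∫⁻ r in Iic (0:ℝ), ENNReal.ofReal (g r) * I₂ r ^ q) := by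
        have hm : AEMeasurable (fun r => ENNReal.ofReal (g r) * I₁ r ^ q)
            (volume.restrict (Iic (0:ℝ))) := hg_aemeas.mul (hI₁_meas.pow_const q).aemeasurable
        rw [lintegral_add_left' hm]
    _ ≤ (2:ℝ≥0∞) ^ (p-1) * ((∫⁻ r in Iic (0:ℝ), ENNReal.ofReal (g r) *
          (∫⁻ s in Ioc (0:ℝ) t,
            K s * (‖(if s + r ≤ 0 then Φ (s + r) else (0:E))‖₊ : ℝ≥0∞) ^ 2) ^ q) +
          (∫⁻ r in Icc (-t) (0:ℝ), ENNReal.ofReal (g r)) * S) :=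
        mul_le_mul_right (add_le_add (le_of_eq hEq1.symm) hIneq2) _
end

section
/- Let 0 < T < T₀, set T₁ := T₀ - T, and let α ∈ (0,1/2), p ∈ [1,∞). Let Φ : (-∞,0] → E and U : (0,T] → E be strongly measurable, and define Û : (-∞,T₀] → E by Û = Φ on (-∞,0], Û = U on (0,T], Û = 0 on (T,T₀], and Φ̂ : (-∞,T₀] → E by Φ̂ = Φ on (-∞,0] and Φ̂ = 0 on (0,T₀]. Then for every t ∈ [0,T₁], ∫_{-∞}^0 g(r)·(∫_0^t (t-s)^{-2α}‖Û(T+s+r)‖^2 ds)^{p/2} dr ≤ 2^{p-1}·[ ∫_{-∞}^0 g(r)·(∫_0^t (t-s)^{-2α}‖Φ̂(T+s+r)‖^2 ds)^{p/2} dr + (∫_{-(t+T)}^0 g(r) dr)·sup_{t'∈[0,T]} (∫_0^{t'} (t'-u)^{-2α}‖U(u)‖^2 du)^{p/2} ]. -/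
open MeasureTheory Set ENNReal

/-- Mean inequality in `ℝ≥0∞` with exponent `p/2` and constant `2^(p-1)`, for `1 ≤ p`. -/
lemma two_rpow_mean_aux {p : ℝ} (hp : 1 ≤ p) (a b : ℝ≥0∞) :
    (a + b) ^ (p / 2) ≤ (2 : ℝ≥0∞) ^ (p - 1) * (a ^ (p / 2) + b ^ (p / 2)) := by
  have h1 : (1 : ℝ≥0∞) ≤ (2 : ℝ≥0∞) ^ (p - 1) := by
    calc (1 : ℝ≥0∞) = (2 : ℝ≥0∞) ^ (0 : ℝ) := by simp
    _ ≤ (2 : ℝ≥0∞) ^ (p - 1) :=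
      ENNReal.rpow_le_rpow_of_exponent_le (by norm_num) (by linarith)
  rcases le_total p 2 with h2 | h2
  · calc (a + b) ^ (p / 2) ≤ a ^ (p / 2) + b ^ (p / 2) :=
        ENNReal.rpow_add_le_add_rpow a b (by linarith) (by linarith)
    _ = 1 * (a ^ (p / 2) + b ^ (p / 2)) := (one_mul _).symm
    _ ≤ (2 : ℝ≥0∞) ^ (p - 1) * (a ^ (p / 2) + b ^ (p / 2)) := by
        exact mul_le_mul_left h1 _
  · calc (a + b) ^ (p / 2)
        ≤ (2 : ℝ≥0∞) ^ (p / 2 - 1) * (a ^ (p / 2) + b ^ (p / 2)) :=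
        ENNReal.rpow_add_le_mul_rpow_add_rpow a b (by linarith)
    _ ≤ (2 : ℝ≥0∞) ^ (p - 1) * (a ^ (p / 2) + b ^ (p / 2)) := by
        refine mul_le_mul_left ?_ _
        exact ENNReal.rpow_le_rpow_of_exponent_le (by norm_num) (by linarith)

/-- Translation change of variables for set Lebesgue integrals on `Ioc`. -/
lemma shift_lintegral_Ioc (f : ℝ → ℝ≥0∞) (a b c : ℝ) :
    (∫⁻ s in Set.Ioc a b, f (s + c)) = ∫⁻ u in Set.Ioc (a + c) (b + c), f u := by
  rw [← lintegral_indicator measurableSet_Ioc, ← lintegral_indicator measurableSet_Ioc]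
  rw [← lintegral_add_right_eq_self (fun u => (Set.Ioc (a + c) (b + c)).indicator f u) c]
  congr 1
  ext s
  by_cases h : s ∈ Set.Ioc a b
  · rw [Set.indicator_of_mem h, Set.indicator_of_mem]
    simp only [Set.mem_Ioc] at h ⊢
    constructor <;> linarith [h.1, h.2]
  · rw [Set.indicator_of_notMem h, Set.indicator_of_notMem]
    simp only [Set.mem_Ioc] at h ⊢
    intro h'
    exact absurd ⟨by linarith [h'.1], by linarith [h'.2]⟩ h

/-- with `Û = Φ` on `(-∞,0]`, `U` on `(0,T]`, `0` on `(T,T₀]`, and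
`Φ̂ = Φ` on `(-∞,0]`, `0` on `(0,T₀]`, for every `t ∈ [0,T₁]`, `T₁ = T₀ - T`
(in the extended reals):
`∫_{-∞}^0 g(r)·(∫_0^t (t-s)^{-2α}‖Û(T+s+r)‖² ds)^{p/2} dr
  ≤ 2^{p-1}·[ ∫_{-∞}^0 g(r)·(∫_0^t (t-s)^{-2α}‖Φ̂(T+s+r)‖² ds)^{p/2} dr
    + (∫_{-(t+T)}^0 g(r) dr)·sup_{t'∈[0,T]} (∫_0^{t'} (t'-u)^{-2α}‖U(u)‖² du)^{p/2} ]`. -/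
theorem shifted_solution_history_kernel_estimate
    {E : Type*} [NormedAddCommGroup E] [NormedSpace ℝ E] [CompleteSpace E]
    (p : ℝ) (hp : 1 ≤ p)
    (g G : ℝ → ℝ)
    (hg_pos : ∀ θ ≤ (0:ℝ), 0 < g θ)
    (hg_int : ∀ r : ℝ, 0 ≤ r → IntegrableOn g (Set.Icc (-r) 0))
    (hG_nonneg : ∀ s ≤ (0:ℝ), 0 ≤ G s)
    (hG_locbdd : ∀ r : ℝ, 0 ≤ r → ∃ C : ℝ, ∀ s ∈ Set.Icc (-r) 0, G s ≤ C)
    (hGg : ∀ s ≤ (0:ℝ),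
      ∀ᵐ θ ∂(volume.restrict (Set.Iic (0:ℝ))), g (s + θ) ≤ G s * g θ)
    (T T₀ α : ℝ) (hT : 0 < T) (hTT₀ : T < T₀) (hα : α ∈ Set.Ioo (0:ℝ) (1/2))
    (Φ U : ℝ → E) (hΦ_meas : StronglyMeasurable Φ) (hU_meas : StronglyMeasurable U)
    (t : ℝ) (ht : t ∈ Set.Icc 0 (T₀ - T)) :
    (∫⁻ r in Set.Iic (0:ℝ), ENNReal.ofReal (g r) *
        (∫⁻ s in Set.Ioc (0:ℝ) t,
          ENNReal.ofReal ((t - s) ^ (-(2*α))) *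
            (‖(if T + s + r ≤ 0 then Φ (T + s + r)
                else if T + s + r ≤ T then U (T + s + r) else 0)‖₊ : ℝ≥0∞) ^ 2)
          ^ (p/2)) ≤
      (2 : ℝ≥0∞) ^ (p - 1) *
        ((∫⁻ r in Set.Iic (0:ℝ), ENNReal.ofReal (g r) *
            (∫⁻ s in Set.Ioc (0:ℝ) t,
              ENNReal.ofReal ((t - s) ^ (-(2*α))) *
                (‖(if T + s + r ≤ 0 then Φ (T + s + r) else 0)‖₊ : ℝ≥0∞) ^ 2) ^ (p/2)) +
          (∫⁻ r in Set.Icc (-(t + T)) (0:ℝ), ENNReal.ofReal (g r)) *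
            ⨆ t' ∈ Set.Icc (0:ℝ) T,
              (∫⁻ u in Set.Ioc (0:ℝ) t',
                ENNReal.ofReal ((t' - u) ^ (-(2*α))) * (‖U u‖₊ : ℝ≥0∞) ^ 2) ^ (p/2)) := by
  classical
  obtain ⟨ht0, htT₁⟩ := ht
  -- abbreviations
  set A : ℝ → ℝ≥0∞ := fun r => ∫⁻ s in Set.Ioc (0:ℝ) t,
    ENNReal.ofReal ((t - s) ^ (-(2*α))) *
      (‖(if T + s + r ≤ 0 then Φ (T + s + r) else 0)‖₊ : ℝ≥0∞) ^ 2 with hA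
  set B : ℝ → ℝ≥0∞ := fun r => ∫⁻ s in Set.Ioc (0:ℝ) t,
    ENNReal.ofReal ((t - s) ^ (-(2*α))) *
      (‖(if 0 < T + s + r ∧ T + s + r ≤ T then U (T + s + r) else 0)‖₊ : ℝ≥0∞) ^ 2 with hB
  set J : ℝ → ℝ≥0∞ := fun t' => ∫⁻ u in Set.Ioc (0:ℝ) t',
    ENNReal.ofReal ((t' - u) ^ (-(2*α))) * (‖U u‖₊ : ℝ≥0∞) ^ 2 with hJ
  set S : ℝ≥0∞ := ⨆ t' ∈ Set.Icc (0:ℝ) T, (J t') ^ (p/2) with hS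
  have hp2 : (0:ℝ) < p / 2 := by linarith
  -- measurability of the Φ̂-integrand
  have hAmeas : ∀ r : ℝ, Measurable fun s =>
      ENNReal.ofReal ((t - s) ^ (-(2*α))) *
        (‖(if T + s + r ≤ 0 then Φ (T + s + r) else 0)‖₊ : ℝ≥0∞) ^ 2 := by
    intro r
    have hker : Measurable fun s : ℝ => ENNReal.ofReal ((t - s) ^ (-(2*α))) :=
      ((measurable_const.sub measurable_id).pow_const _).ennreal_ofReal
    have hset : MeasurableSet {s : ℝ | T + s + r ≤ 0} := by
      have : {s : ℝ | T + s + r ≤ 0} = Set.Iic (-T - r) := by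
        ext s; simp [Set.mem_Iic]; constructor <;> intro <;> linarith
      rw [this]; exact measurableSet_Iic
    have hΦ : Measurable fun s : ℝ => (‖Φ (T + s + r)‖₊ : ℝ≥0∞) :=
      (hΦ_meas.comp_measurable
        (by fun_prop : Measurable fun s : ℝ => T + s + r)).enorm
    have : Measurable fun s : ℝ =>
        (‖(if T + s + r ≤ 0 then Φ (T + s + r) else 0)‖₊ : ℝ≥0∞) := by
      have hmi : Measurable ({s : ℝ | T + s + r ≤ 0}.indicator
          fun s => (‖Φ (T + s + r)‖₊ : ℝ≥0∞)) := hΦ.indicator hset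
      convert hmi using 1
      ext s
      by_cases h : T + s + r ≤ 0
      · rw [Set.indicator_of_mem (by exact h)]
        simp [h]
      · rw [Set.indicator_of_notMem (by exact h)]
        simp [h]
    exact hker.mul (this.pow_const 2)
  -- splitting of the inner integral
  have hIAB : ∀ r : ℝ, (∫⁻ s in Set.Ioc (0:ℝ) t,
      ENNReal.ofReal ((t - s) ^ (-(2*α))) *
        (‖(if T + s + r ≤ 0 then Φ (T + s + r)
            else if T + s + r ≤ T then U (T + s + r) else 0)‖₊ : ℝ≥0∞) ^ 2)
      = A r + B r := by
    intro r
    rw [hA, hB, ← lintegral_add_left (hAmeas r)]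
    refine lintegral_congr fun s => ?_
    by_cases h1 : T + s + r ≤ 0
    · have h2 : ¬ (0 < T + s + r ∧ T + s + r ≤ T) := fun h => absurd h1 (not_le.2 h.1)
      simp [h1, h2]
    · by_cases h3 : T + s + r ≤ T
      · have h2 : 0 < T + s + r ∧ T + s + r ≤ T := ⟨not_le.1 h1, h3⟩
        simp [h1, h2, h3]
      · have h2 : ¬ (0 < T + s + r ∧ T + s + r ≤ T) := fun h => absurd h.2 h3
        simp [h1, h2, h3]
  -- key bound on B
  have hBle : ∀ r ∈ Set.Icc (-(t + T)) (0:ℝ), (B r) ^ (p/2) ≤ S := by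
    intro r hr
    obtain ⟨hr1, hr2⟩ := hr
    set c : ℝ := T + r with hc
    set t' : ℝ := t + c with ht'
    set t₀ : ℝ := min t' T with ht₀
    have ht'0 : 0 ≤ t' := by simp only [ht', hc]; linarith
    have ht₀mem : t₀ ∈ Set.Icc (0:ℝ) T :=
      ⟨le_min ht'0 hT.le, min_le_right _ _⟩
    have ht₀t' : t₀ ≤ t' := min_le_left _ _
    -- change of variables
    set f : ℝ → ℝ≥0∞ := fun u =>
      ENNReal.ofReal ((t' - u) ^ (-(2*α))) *
        (‖(if 0 < u ∧ u ≤ T then U u else 0)‖₊ : ℝ≥0∞) ^ 2 with hf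
    have hBr : B r = ∫⁻ u in Set.Ioc c t', f u := by
      have h1 : B r = ∫⁻ s in Set.Ioc (0:ℝ) t, f (s + c) := by
        rw [hB]
        refine lintegral_congr fun s => ?_
        have he : T + s + r = s + c := by rw [hc]; ring
        have he2 : t - s = t' - (s + c) := by rw [ht', hc]; ring
        rw [hf]
        simp only [he, he2]
      rw [h1, shift_lintegral_Ioc f 0 t c, zero_add, ← ht']
    have hkey : B r ≤ J t₀ := by
      rw [hBr]
      show (∫⁻ u in Set.Ioc c t', f u) ≤ ∫⁻ u in Set.Ioc (0:ℝ) t₀,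
        ENNReal.ofReal ((t₀ - u) ^ (-(2*α))) * (‖U u‖₊ : ℝ≥0∞) ^ 2
      rw [← lintegral_indicator measurableSet_Ioc,
        ← lintegral_indicator measurableSet_Ioc]
      refine lintegral_mono_ae ?_
      have hnull : (volume : Measure ℝ) {t₀} = 0 := measure_singleton _
      filter_upwards [measure_eq_zero_iff_ae_notMem.mp hnull] with u hu
      by_cases hmem : u ∈ Set.Ioc c t'
      · rw [Set.indicator_of_mem hmem]
        by_cases hcond : 0 < u ∧ u ≤ T
        · have hut₀ : u ∈ Set.Ioc (0:ℝ) t₀ := ⟨hcond.1, le_min hmem.2 hcond.2⟩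
          rw [Set.indicator_of_mem hut₀]
          have hu_lt : u < t₀ := lt_of_le_of_ne (le_min hmem.2 hcond.2)
            (fun h => hu (by simp [h]))
          have hker_le : (t' - u) ^ (-(2*α)) ≤ (t₀ - u) ^ (-(2*α)) := by
            refine Real.rpow_le_rpow_of_nonpos (by linarith) (by linarith) ?_
            simp only [neg_nonpos]
            linarith [hα.1]
          rw [hf]
          simp only [hcond, if_true]
          exact mul_le_mul_left (ENNReal.ofReal_le_ofReal hker_le) _
        · rw [hf]
          simp only [hcond, if_false]
          simp
      · rw [Set.indicator_of_notMem hmem]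
        exact zero_le
    calc (B r) ^ (p/2) ≤ (J t₀) ^ (p/2) := ENNReal.rpow_le_rpow hkey hp2.le
    _ ≤ S := by
      rw [hS]
      exact le_biSup (fun t'' => (J t'') ^ (p/2)) ht₀mem
  -- B vanishes off Icc (-(t+T)) 0
  have hBzero : ∀ r : ℝ, r ∉ Set.Icc (-(t + T)) (0:ℝ) → B r = 0 := by
    intro r hr
    rw [hB]
    rw [show (0:ℝ≥0∞) = ∫⁻ _ in Set.Ioc (0:ℝ) t, 0 from (lintegral_zero).symm]
    refine setLIntegral_congr_fun measurableSet_Ioc ?_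
    intro s hs
    obtain ⟨hs1, hs2⟩ := hs
    rw [Set.mem_Icc, not_and_or] at hr
    have hcond : ¬ (0 < T + s + r ∧ T + s + r ≤ T) := by
      rcases hr with h | h
      · push_neg at h
        intro hc
        have : T + s + r ≤ T + t + r := by linarith
        linarith [hc.1]
      · push_neg at h
        intro hc
        have : T < T + s + r := by linarith
        linarith [hc.2]
    simp [hcond]
  -- auxiliary a.e.-measurability of g on the compact window
  have htT : (0:ℝ) ≤ t + T := by linarith
  have hsub : Set.Icc (-(t + T)) (0:ℝ) ⊆ Set.Iic (0:ℝ) := Set.Icc_subset_Iic_self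
  have hg_ae : AEMeasurable (fun x => ENNReal.ofReal (g x))
      (volume.restrict (Set.Icc (-(t + T)) (0:ℝ))) :=
    ((hg_int (t + T) htT).aestronglyMeasurable.aemeasurable).ennreal_ofReal
  have hrr : (volume.restrict (Set.Iic (0:ℝ))).restrict (Set.Icc (-(t + T)) (0:ℝ))
      = volume.restrict (Set.Icc (-(t + T)) (0:ℝ)) := by
    rw [Measure.restrict_restrict measurableSet_Icc, Set.inter_eq_self_of_subset_left hsub]
  have hind_ae : AEMeasurable
      (fun r => (Set.Icc (-(t + T)) (0:ℝ)).indicator (fun x => ENNReal.ofReal (g x)) r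
        * ((2 : ℝ≥0∞) ^ (p - 1) * S))
      (volume.restrict (Set.Iic (0:ℝ))) := by
    refine AEMeasurable.mul_const ?_ _
    rw [aemeasurable_indicator_iff measurableSet_Icc, hrr]
    exact hg_ae
  have h2top : (2 : ℝ≥0∞) ^ (p - 1) ≠ ⊤ :=
    ENNReal.rpow_ne_top_of_nonneg (by linarith) (by norm_num)
  -- pointwise bound
  have hpt : ∀ r : ℝ, ENNReal.ofReal (g r) * (A r + B r) ^ (p/2) ≤
      (2 : ℝ≥0∞) ^ (p - 1) * (ENNReal.ofReal (g r) * (A r) ^ (p/2))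
        + (Set.Icc (-(t + T)) (0:ℝ)).indicator (fun x => ENNReal.ofReal (g x)) r
            * ((2 : ℝ≥0∞) ^ (p - 1) * S) := by
    intro r
    have h1 : ENNReal.ofReal (g r) * (A r + B r) ^ (p/2) ≤
        (2 : ℝ≥0∞) ^ (p - 1) * (ENNReal.ofReal (g r) * (A r) ^ (p/2))
          + (2 : ℝ≥0∞) ^ (p - 1) * (ENNReal.ofReal (g r) * (B r) ^ (p/2)) := by
      calc ENNReal.ofReal (g r) * (A r + B r) ^ (p/2)
          ≤ ENNReal.ofReal (g r) *
            ((2 : ℝ≥0∞) ^ (p - 1) * ((A r) ^ (p/2) + (B r) ^ (p/2))) :=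
            mul_le_mul_right (two_rpow_mean_aux hp _ _) _
        _ = (2 : ℝ≥0∞) ^ (p - 1) * (ENNReal.ofReal (g r) * (A r) ^ (p/2))
          + (2 : ℝ≥0∞) ^ (p - 1) * (ENNReal.ofReal (g r) * (B r) ^ (p/2)) := by ring
    refine h1.trans (add_le_add_right ?_ _)
    by_cases hmem : r ∈ Set.Icc (-(t + T)) (0:ℝ)
    · rw [Set.indicator_of_mem hmem]
      calc (2 : ℝ≥0∞) ^ (p - 1) * (ENNReal.ofReal (g r) * (B r) ^ (p/2))
          ≤ (2 : ℝ≥0∞) ^ (p - 1) * (ENNReal.ofReal (g r) * S) :=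
            mul_le_mul_right (mul_le_mul_right (hBle r hmem) _) _
        _ = ENNReal.ofReal (g r) * ((2 : ℝ≥0∞) ^ (p - 1) * S) := by ring
    · rw [Set.indicator_of_notMem hmem, hBzero r hmem, ENNReal.zero_rpow_of_pos hp2]
      simp
  -- the indicator integral
  have hind_int : (∫⁻ r in Set.Iic (0:ℝ),
      (Set.Icc (-(t + T)) (0:ℝ)).indicator (fun x => ENNReal.ofReal (g x)) r
        * ((2 : ℝ≥0∞) ^ (p - 1) * S))
      = (∫⁻ r in Set.Icc (-(t + T)) (0:ℝ), ENNReal.ofReal (g r))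
        * ((2 : ℝ≥0∞) ^ (p - 1) * S) := by
    have heq : (fun r => (Set.Icc (-(t + T)) (0:ℝ)).indicator
        (fun x => ENNReal.ofReal (g x)) r * ((2 : ℝ≥0∞) ^ (p - 1) * S))
        = fun r => (Set.Icc (-(t + T)) (0:ℝ)).indicator
            (fun x => ENNReal.ofReal (g x) * ((2 : ℝ≥0∞) ^ (p - 1) * S)) r := by
      funext r
      by_cases hmem : r ∈ Set.Icc (-(t + T)) (0:ℝ)
      · rw [Set.indicator_of_mem hmem, Set.indicator_of_mem hmem]
      · rw [Set.indicator_of_notMem hmem, Set.indicator_of_notMem hmem, zero_mul]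
    rw [heq, lintegral_indicator measurableSet_Icc, hrr,
      lintegral_mul_const'' _ hg_ae]
  -- putting everything together
  calc (∫⁻ r in Set.Iic (0:ℝ), ENNReal.ofReal (g r) *
        (∫⁻ s in Set.Ioc (0:ℝ) t,
          ENNReal.ofReal ((t - s) ^ (-(2*α))) *
            (‖(if T + s + r ≤ 0 then Φ (T + s + r)
                else if T + s + r ≤ T then U (T + s + r) else 0)‖₊ : ℝ≥0∞) ^ 2) ^ (p/2))
      = ∫⁻ r in Set.Iic (0:ℝ), ENNReal.ofReal (g r) * (A r + B r) ^ (p/2) := by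
        refine lintegral_congr fun r => ?_
        rw [hIAB r]
    _ ≤ ∫⁻ r in Set.Iic (0:ℝ),
        ((2 : ℝ≥0∞) ^ (p - 1) * (ENNReal.ofReal (g r) * (A r) ^ (p/2))
          + (Set.Icc (-(t + T)) (0:ℝ)).indicator (fun x => ENNReal.ofReal (g x)) r
              * ((2 : ℝ≥0∞) ^ (p - 1) * S)) := lintegral_mono hpt
    _ = (∫⁻ r in Set.Iic (0:ℝ), (2 : ℝ≥0∞) ^ (p - 1) * (ENNReal.ofReal (g r) * (A r) ^ (p/2)))
        + ∫⁻ r in Set.Iic (0:ℝ),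
            (Set.Icc (-(t + T)) (0:ℝ)).indicator (fun x => ENNReal.ofReal (g x)) r
              * ((2 : ℝ≥0∞) ^ (p - 1) * S) :=
        lintegral_add_right' _ hind_ae
    _ = (2 : ℝ≥0∞) ^ (p - 1) *
        ((∫⁻ r in Set.Iic (0:ℝ), ENNReal.ofReal (g r) * (A r) ^ (p/2)) +
          (∫⁻ r in Set.Icc (-(t + T)) (0:ℝ), ENNReal.ofReal (g r)) * S) := by
        rw [lintegral_const_mul' _ _ h2top, hind_int]
        ring
end
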